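/- In the six-symbol bosonic Weyl system realizing the fields β(z), β*(z), ε_1(z), ε_1*(z), ε_2(z), ε_2*(z), with α_0(m) := −½[(:ee*:)(m) + (:eβ*:)(m) + (:βe*:)(m) + (:ββ*:)(m)], the Heisenberg relation at level −1 for the affine root α_0 (of square norm (α_0,α_0) = 4) holds in mode form: for all m, n ∈ ℤ, α_0(m)α_0(n) − α_0(n)α_0(m) = −4m·δ_{m+n,0}·id. (This is the mode form of the relation [α_0(z), α_0(w)] = −4∂_wδ(z−w) = (α_0,α_0)∂_wδ(z−w)·(−1) verified in the proof of Theorem 3.5.) -/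
import Mathlib


noncomputable section

/-- A *bosonic Weyl system* over a set `S` of symbols with pairing `pair : S → S → ℂ`
on a complex vector space `W`: a family of operators `op u k` (`u ∈ S`, `k ∈ ℤ`)
such that `[op u k, op v l] = ⟨u,v⟩ δ_{k+l,0} id`. -/
def IsBosonicWeylSystem {S W : Type*} [AddCommGroup W] [Module ℂ W]
    (pair : S → S → ℂ) (op : S → ℤ → Module.End ℂ W) : Prop :=
  ∀ u v : S, ∀ k l : ℤ,
    op u k * op v l - op v l * op u k =
      if k + l = 0 then pair u v • (1 : Module.End ℂ W) else 0

/-- A family of operators is *locally annihilating* if for every vector `w` and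
every symbol `u`, `op u k w = 0` for all sufficiently large `k`. -/
def LocallyAnnihilating {S W : Type*} [AddCommGroup W] [Module ℂ W]
    (op : S → ℤ → Module.End ℂ W) : Prop :=
  ∀ (w : W) (u : S), ∃ K : ℤ, ∀ k : ℤ, K ≤ k → op u k w = 0

/-- The normally ordered quadratic mode
`(:uv:)(m) = Σ_{j<0} u(j)v(m-j) + Σ_{j≥0} v(m-j)u(j)` applied to a vector `w`;
on a locally annihilating system all but finitely many summands vanish, so the
`finsum` computes the intended (finite) sum. -/
def noMode {S W : Type*} [AddCommGroup W] [Module ℂ W]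
    (op : S → ℤ → Module.End ℂ W) (u v : S) (m : ℤ) (w : W) : W :=
  ∑ᶠ j : ℤ, if j < 0 then op u j (op v (m - j) w) else op v (m - j) (op u j w)

end

/-- The six symbols `β, β*, ε₁, ε₁*, ε₂, ε₂*`: the symbol `(i, false)` is the plain
symbol (`0 = β`, `1 = ε₁ = e`, `2 = ε₂ = f`) and `(i, true)` the starred one. -/
abbrev WSym6 : Type := Fin 3 × Bool

/-- The Gram values `g(β,β) = g(β,e) = g(e,β) = g(e,e) = g(f,f) = 1`, `g(β,f) = g(e,f) = 0`. -/
noncomputable def gram6 : Fin 3 → Fin 3 → ℂ := !![1, 1, 0; 1, 1, 0; 0, 0, 1]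

/-- The pairing `⟨u, v*⟩ = -g(u,v)`, `⟨u*, v⟩ = g(u,v)`, `⟨u,v⟩ = ⟨u*,v*⟩ = 0`. -/
noncomputable def pair6 : WSym6 → WSym6 → ℂ
  | (i, false), (j, true) => -gram6 i j
  | (i, true), (j, false) => gram6 i j
  | _, _ => 0

section
variable {W : Type*} [AddCommGroup W] [Module ℂ W] (op : WSym6 → ℤ → Module.End ℂ W)

/-- `x₀⁺(m) = ½ (:β*e*:)(m)` (applied to a vector). -/
noncomputable def xZeroPlus (m : ℤ) (w : W) : W :=
  (1 / 2 : ℂ) • noMode op (0, true) (1, true) m w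

/-- `x₀⁻(m) = ½ (:βe:)(m)` (applied to a vector). -/
noncomputable def xZeroMinus (m : ℤ) (w : W) : W :=
  (1 / 2 : ℂ) • noMode op (0, false) (1, false) m w

/-- `x₁⁺(m) = √-1 (:ef*:)(m)` (applied to a vector). -/
noncomputable def xOnePlus (m : ℤ) (w : W) : W :=
  Complex.I • noMode op (1, false) (2, true) m w

/-- `α₀(m) = -½[(:ee*:)(m) + (:eβ*:)(m) + (:βe*:)(m) + (:ββ*:)(m)]` (applied to a vector). -/
noncomputable def alZero (m : ℤ) (w : W) : W :=
  (-(1 / 2) : ℂ) • (noMode op (1, false) (1, true) m w + noMode op (1, false) (0, true) m w +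
    noMode op (0, false) (1, true) m w + noMode op (0, false) (0, true) m w)

end

/-- The commutator `[A, B] = AB - BA` of two (pointwise-defined) operators. -/
def brkt {W : Type*} [AddCommGroup W] (A B : W → W) : W → W := fun w => A (B w) - B (A w)

namespace AlZeroAux

variable {W : Type*} [AddCommGroup W] [Module ℂ W]

lemma comm4 (X Y Z T : Module.End ℂ W) (q r : ℂ)
    (hXZ : X*Z = Z*X) (hYT : Y*T = T*Y)
    (hXT : X*T = T*X + q • 1) (hYZ : Y*Z = Z*Y + r • 1) :
    (X*Y)*(Z*T) - (Z*T)*(X*Y) = q • (Z*Y) + r • (X*T) := by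
  have h1 : (X*Y)*(Z*T) = X*(Y*Z)*T := by noncomm_ring
  rw [h1, hYZ]
  have h2 : X*(Z*Y + r•(1:Module.End ℂ W))*T = (X*Z)*(Y*T) + r • (X*T) := by
    simp only [mul_add, add_mul, mul_smul_comm, smul_mul_assoc, mul_one, one_mul]
    noncomm_ring
  rw [h2, hXZ, hYT]
  have h3 : (Z*X)*(T*Y) = Z*(X*T)*Y := by noncomm_ring
  rw [h3, hXT]
  have h4 : Z*(T*X + q•(1:Module.End ℂ W))*Y = (Z*T)*(X*Y) + q•(Z*Y) := by
    simp only [mul_add, add_mul, mul_smul_comm, smul_mul_assoc, mul_one, one_mul]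
    noncomm_ring
  rw [h4]; abel

variable (A B : ℤ → Module.End ℂ W)

noncomputable def P (m j : ℤ) : Module.End ℂ W :=
  if j < 0 then A j * B (m - j) else B (m - j) * A j

noncomputable def hfun (m : ℤ) (w : W) : W := ∑ᶠ j : ℤ, P A B m j w

variable {A B} {c : ℂ}

lemma P_eq (hAB : ∀ k l, A k * B l = B l * A k + (if k + l = 0 then c • (1:Module.End ℂ W) else 0))
    (m j : ℤ) : ∃ σ : ℂ, P A B m j = A j * B (m - j) + σ • 1 := by
  unfold P
  split_ifs with h
  · exact ⟨0, by simp⟩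
  · refine ⟨if m = 0 then -c else 0, ?_⟩
    have h1 := hAB j (m - j)
    simp only [show j + (m - j) = m by ring] at h1
    split_ifs at h1 ⊢ with hm
    · rw [h1]; simp only [neg_smul]; abel
    · rw [h1]; simp

lemma P_comm (hAB : ∀ k l, A k * B l = B l * A k + (if k + l = 0 then c • (1:Module.End ℂ W) else 0))
    (hAA : ∀ k l, A k * A l = A l * A k)
    (hBB : ∀ k l, B k * B l = B l * B k)
    (m n i j : ℤ) :
    P A B m i * P A B n j - P A B n j * P A B m i =
      (if j = i + n then c • (A j * B (m - i)) else 0)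
      - (if j = i - m then c • (A i * B (n - j)) else 0) := by
  obtain ⟨σ, hσ⟩ := P_eq hAB m i
  obtain ⟨τ, hτ⟩ := P_eq hAB n j
  rw [hσ, hτ]
  have expand : ∀ U V : Module.End ℂ W,
      (U + σ•1)*(V + τ•1) - (V + τ•1)*(U + σ•1) = U*V - V*U := by
    intro U V
    simp only [mul_add, add_mul, mul_smul_comm, smul_mul_assoc, mul_one, one_mul]
    module
  rw [expand]
  have hXT : A i * B (n - j) = B (n - j) * A i + (if j = i + n then c else 0) • (1:Module.End ℂ W) := by
    have h1 := hAB i (n - j)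
    simp only [show (i + (n - j) = 0) = (j = i + n) by rw [eq_iff_iff]; omega] at h1
    rw [h1]; split_ifs <;> simp
  have hYZ : B (m - i) * A j = A j * B (m - i) + (-(if j = i - m then c else 0)) • (1:Module.End ℂ W) := by
    have h1 := hAB j (m - i)
    simp only [show (j + (m - i) = 0) = (j = i - m) by rw [eq_iff_iff]; omega] at h1
    rw [h1]; split_ifs <;> simp
  have main := comm4 (A i) (B (m-i)) (A j) (B (n-j))
      (if j = i + n then c else 0) (-(if j = i - m then c else 0))
      (hAA i j) (hBB (m-i) (n-j)) hXT hYZ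
  rw [main]
  split_ifs <;> simp [neg_smul, sub_eq_add_neg]


lemma hfun_eq_sum (m N : ℤ) (w : W) {K : ℤ}
    (hK : ∀ k, K ≤ k → A k w = 0 ∧ B k w = 0)
    (h0 : 0 ≤ N) (h1 : K - m - 1 ≤ N) (h2 : K - 1 ≤ N) :
    hfun A B m w = ∑ j ∈ Finset.Icc (-N) N, P A B m j w := by
  refine finsum_eq_finset_sum_of_support_subset _ ?_
  intro j hj
  simp only [Function.mem_support, ne_eq] at hj
  by_contra hj'
  apply hj
  simp only [Finset.coe_Icc, Set.mem_Icc, not_and_or, not_le] at hj'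
  unfold P
  split_ifs with hjlt
  · have hBz : B (m - j) w = 0 := (hK (m - j) (by omega)).2
    simp [Module.End.mul_apply, hBz]
  · have hAz : A j w = 0 := (hK j (by omega)).1
    simp [Module.End.mul_apply, hAz]

lemma Icc_eq_Ico (a b : ℤ) : Finset.Icc a b = Finset.Ico a (b + 1) := by
  ext k; simp only [Finset.mem_Icc, Finset.mem_Ico]; omega

lemma Icc_inter_Icc' (a b a' b' : ℤ) :
    Finset.Icc a b ∩ Finset.Icc a' b' = Finset.Icc (max a a') (min b b') := by
  ext k; simp only [Finset.mem_inter, Finset.mem_Icc]; omega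


lemma hfun_comm
    (hAB : ∀ k l, A k * B l = B l * A k + (if k + l = 0 then c • (1:Module.End ℂ W) else 0))
    (hAA : ∀ k l, A k * A l = A l * A k)
    (hBB : ∀ k l, B k * B l = B l * B k)
    (loc : ∀ v : W, ∃ K : ℤ, ∀ k, K ≤ k → A k v = 0 ∧ B k v = 0)
    (m n : ℤ) (w : W) :
    hfun A B m (hfun A B n w) - hfun A B n (hfun A B m w)
      = if m + n = 0 then (-(c * c) * (m:ℂ)) • w else 0 := by
  obtain ⟨K1, hK1⟩ := loc w
  obtain ⟨K2, hK2⟩ := loc (hfun A B n w)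
  obtain ⟨K3, hK3⟩ := loc (hfun A B m w)
  obtain ⟨K, hle1, hle2, hle3, hKmn, hK0⟩ :
      ∃ K : ℤ, K1 ≤ K ∧ K2 ≤ K ∧ K3 ≤ K ∧ m + n + 1 ≤ K ∧ 0 ≤ K :=
    ⟨(K1.natAbs + K2.natAbs + K3.natAbs + (m+n).natAbs + 1 : ℤ), by omega, by omega, by omega,
      by omega, by omega⟩
  have hKw : ∀ k, K ≤ k → A k w = 0 ∧ B k w = 0 := fun k hk => hK1 k (by omega)
  set N : ℤ := K + (m.natAbs : ℤ) + (n.natAbs : ℤ) with hN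
  have hN0 : 0 ≤ N := by omega
  set I := Finset.Icc (-N) N with hI
  have hsum_n : hfun A B n w = ∑ j ∈ I, P A B n j w :=
    hfun_eq_sum n N w (K := K) hKw hN0 (by omega) (by omega)
  have hsum_m : hfun A B m w = ∑ j ∈ I, P A B m j w :=
    hfun_eq_sum m N w (K := K) hKw hN0 (by omega) (by omega)
  have houter1 : hfun A B m (hfun A B n w) = ∑ i ∈ I, P A B m i (hfun A B n w) :=
    hfun_eq_sum m N _ (K := K) (fun k hk => hK2 k (by omega)) hN0 (by omega) (by omega)
  have houter2 : hfun A B n (hfun A B m w) = ∑ i ∈ I, P A B n i (hfun A B m w) :=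
    hfun_eq_sum n N _ (K := K) (fun k hk => hK3 k (by omega)) hN0 (by omega) (by omega)
  rw [houter1, houter2]
  conv_lhs => rw [hsum_n, hsum_m]
  simp only [map_sum]
  rw [Finset.sum_comm (s := I) (t := I) (f := fun i j => P A B n i (P A B m j w))]
  rw [← Finset.sum_sub_distrib]
  simp only [← Finset.sum_sub_distrib]
  have step : ∀ i j : ℤ, P A B m i (P A B n j w) - P A B n j (P A B m i w)
      = (if j = i + n then c • (A j) ((B (m - i)) w) else 0)
        - (if j = i - m then c • (A i) ((B (n - j)) w) else 0) := by
    intro i j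
    have hc := P_comm hAB hAA hBB m n i j
    have h2 := congrArg (fun f : Module.End ℂ W => f w) hc
    simpa [LinearMap.sub_apply, Module.End.mul_apply, LinearMap.smul_apply,
      apply_ite (fun f : Module.End ℂ W => f w)] using h2
  simp only [step]
  simp only [Finset.sum_sub_distrib]
  simp only [Finset.sum_ite_eq' I]
  have e1 : (∑ x ∈ I, if x + n ∈ I then c • (A (x+n)) ((B (m-x)) w) else 0)
      = ∑ k ∈ Finset.Icc (max (-N) (-N-n) + n) (min N (N-n) + n),
          c • (A k) ((B (m+n-k)) w) := by
    have hmem : ∀ x : ℤ, (x + n ∈ I) = (x ∈ Finset.Icc (-N-n) (N-n)) := by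
      intro x; rw [eq_iff_iff]; simp only [hI, Finset.mem_Icc]; omega
    simp only [hmem]
    rw [Finset.sum_ite_mem, hI, Icc_inter_Icc']
    rw [← Finset.map_add_right_Icc _ _ n, Finset.sum_map]
    refine Finset.sum_congr rfl fun i _ => ?_
    rw [addRightEmbedding_apply, show m + n - (i + n) = m - i by ring]
  have e2 : (∑ x ∈ I, if x - m ∈ I then c • (A x) ((B (n-(x-m))) w) else 0)
      = ∑ k ∈ Finset.Icc (max (-N) (-N+m)) (min N (N+m)),
          c • (A k) ((B (m+n-k)) w) := by
    have hmem : ∀ x : ℤ, (x - m ∈ I) = (x ∈ Finset.Icc (-N+m) (N+m)) := by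
      intro x; rw [eq_iff_iff]; simp only [hI, Finset.mem_Icc]; omega
    simp only [hmem]
    rw [Finset.sum_ite_mem, hI, Icc_inter_Icc']
    refine Finset.sum_congr rfl fun i _ => ?_
    rw [show n - (i - m) = m + n - i by ring]
  rw [e1, e2]
  have key : ∀ a b : ℤ, a ≤ m + n - K → K - 1 ≤ b →
      ∑ k ∈ Finset.Icc a b, c • (A k) ((B (m+n-k)) w)
        = (∑ k ∈ Finset.Ico (m+n-K+1) K, c • (A k) ((B (m+n-k)) w))
          + (((b + 1 - K).toNat : ℂ)) • (c • (if m + n = 0 then c • w else 0)) := by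
    intro a b ha hb
    rw [Icc_eq_Ico]
    rw [← Finset.Ico_union_Ico_eq_Ico (show a ≤ m+n-K+1 by omega) (show m+n-K+1 ≤ b+1 by omega),
        Finset.sum_union (Finset.Ico_disjoint_Ico_consecutive _ _ _)]
    rw [← Finset.Ico_union_Ico_eq_Ico (show m+n-K+1 ≤ K by omega) (show K ≤ b+1 by omega),
        Finset.sum_union (Finset.Ico_disjoint_Ico_consecutive _ _ _)]
    have hz : ∑ k ∈ Finset.Ico a (m+n-K+1), c • (A k) ((B (m+n-k)) w) = 0 :=
      Finset.sum_eq_zero fun k hk => by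
        have hk' := Finset.mem_Ico.mp hk
        have hB0 : (B (m+n-k)) w = 0 := (hKw (m+n-k) (by omega)).2
        rw [hB0, map_zero, smul_zero]
    have hcon : ∑ k ∈ Finset.Ico K (b+1), c • (A k) ((B (m+n-k)) w)
        = (((b+1-K).toNat : ℂ)) • (c • (if m + n = 0 then c • w else 0)) := by
      have hval : ∀ k ∈ Finset.Ico K (b+1), c • (A k) ((B (m+n-k)) w)
          = c • (if m + n = 0 then c • w else 0) := by
        intro k hk
        have hk' := Finset.mem_Ico.mp hk
        have h2 := congrArg (fun f : Module.End ℂ W => f w) (hAB k (m+n-k))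
        simp only [Module.End.mul_apply, LinearMap.add_apply, LinearMap.smul_apply,
          Module.End.one_apply, LinearMap.zero_apply,
          apply_ite (fun f : Module.End ℂ W => f w)] at h2
        simp only [show (k + (m+n-k) = 0) = (m + n = 0) by rw [eq_iff_iff]; omega] at h2
        rw [h2, (hKw k (by omega)).1, map_zero, zero_add]
      rw [Finset.sum_congr rfl hval, Finset.sum_const, ← Nat.cast_smul_eq_nsmul ℂ, Int.card_Ico]
    rw [hz, zero_add, hcon]
  rw [key _ _ (by omega) (by omega), key _ _ (by omega) (by omega)]
  have hMXY : ∀ (M X Y : W), (M + X) - (M + Y) = X - Y := fun _ _ _ => by abel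
  rw [hMXY, ← sub_smul]
  by_cases hmn : m + n = 0
  · simp only [if_pos hmn]
    have hx1 : ((min N (N-n) + n + 1 - K).toNat : ℤ) = min N (N-n) + n + 1 - K :=
      Int.toNat_of_nonneg (by omega)
    have hx2 : ((min N (N+m) + 1 - K).toNat : ℤ) = min N (N+m) + 1 - K :=
      Int.toNat_of_nonneg (by omega)
    have hxx : ((min N (N-n) + n + 1 - K).toNat : ℤ) - ((min N (N+m) + 1 - K).toNat : ℤ)
        = -m := by rw [hx1, hx2]; omega
    have hxc : (((min N (N-n) + n + 1 - K).toNat : ℂ)) - (((min N (N+m) + 1 - K).toNat : ℂ))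
        = -(m:ℂ) := by exact_mod_cast congrArg (Int.cast : ℤ → ℂ) hxx
    rw [hxc, smul_smul, smul_smul]
    congr 1
    ring
  · simp only [if_neg hmn, smul_zero, sub_zero, sub_self]

lemma hfun_smul
    (loc : ∀ v : W, ∃ K : ℤ, ∀ k, K ≤ k → A k v = 0 ∧ B k v = 0)
    (m : ℤ) (r : ℂ) (v : W) :
    hfun A B m (r • v) = r • hfun A B m v := by
  obtain ⟨K, hK⟩ := loc v
  have hK' : ∀ k, K ≤ k → A k (r • v) = 0 ∧ B k (r • v) = 0 := fun k hk =>
    ⟨by rw [map_smul, (hK k hk).1, smul_zero], by rw [map_smul, (hK k hk).2, smul_zero]⟩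
  set N : ℤ := (K.natAbs : ℤ) + (m.natAbs : ℤ) with hN
  rw [hfun_eq_sum m N (r • v) (K := K) hK' (by omega) (by omega) (by omega),
      hfun_eq_sum m N v (K := K) hK (by omega) (by omega) (by omega), Finset.smul_sum]
  exact Finset.sum_congr rfl fun j _ => map_smul _ _ _

end AlZeroAux

/-- in the six-symbol bosonic Weyl system, the Heisenberg relation at
level `-1` for the affine root `α₀` (of square norm `4`) holds in mode form:
`[α₀(m), α₀(n)] = -4m δ_{m+n,0} id`. -/
theorem alZero_heisenberg {W : Type*} [AddCommGroup W] [Module ℂ W]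
    (op : WSym6 → ℤ → Module.End ℂ W)
    (hW : IsBosonicWeylSystem pair6 op) (hA : LocallyAnnihilating op)
    (m n : ℤ) (w : W) :
    alZero op m (alZero op n w) - alZero op n (alZero op m w) =
      if m + n = 0 then (-4 * (m : ℂ)) • w else 0 := by
  classical
  set A : ℤ → Module.End ℂ W := fun k => op (1, false) k + op (0, false) k with hAdef
  set B : ℤ → Module.End ℂ W := fun k => op (1, true) k + op (0, true) k with hBdef
  have expand4 : ∀ (x1 x2 y1 y2 : Module.End ℂ W),
      (x1 + x2) * (y1 + y2) - (y1 + y2) * (x1 + x2) =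
        (x1*y1 - y1*x1) + ((x1*y2 - y2*x1) + ((x2*y1 - y1*x2) + (x2*y2 - y2*x2))) := by
    intros; noncomm_ring
  have p1 : pair6 (1, false) (1, true) = -1 := by
    simp [pair6, gram6]
  have p2 : pair6 (1, false) (0, true) = -1 := by
    simp [pair6, gram6]
  have p3 : pair6 (0, false) (1, true) = -1 := by
    simp [pair6, gram6]
  have p4 : pair6 (0, false) (0, true) = -1 := by
    simp [pair6, gram6]
  have hAB : ∀ k l, A k * B l = B l * A k +
      (if k + l = 0 then (-4 : ℂ) • (1 : Module.End ℂ W) else 0) := by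
    intro k l
    have h := expand4 (op (1, false) k) (op (0, false) k) (op (1, true) l) (op (0, true) l)
    rw [hW (1, false) (1, true) k l, hW (1, false) (0, true) k l,
        hW (0, false) (1, true) k l, hW (0, false) (0, true) k l, p1, p2, p3, p4] at h
    have h2 := sub_eq_iff_eq_add.mp h
    show A k * B l = _
    rw [hAdef, hBdef, h2]
    split_ifs
    · simp only [neg_smul, one_smul]
      module
    · simp
  have hAA : ∀ k l, A k * A l = A l * A k := by
    intro k l
    have h := expand4 (op (1, false) k) (op (0, false) k) (op (1, false) l) (op (0, false) l)
    rw [hW (1, false) (1, false) k l, hW (1, false) (0, false) k l,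
        hW (0, false) (1, false) k l, hW (0, false) (0, false) k l] at h
    have hz : ∀ i j : Fin 3, pair6 (i, false) (j, false) = 0 := fun i j => rfl
    rw [hz, hz, hz, hz] at h
    have h2 := sub_eq_iff_eq_add.mp h
    show A k * A l = _
    rw [hAdef, h2]
    split_ifs <;> simp
  have hBB : ∀ k l, B k * B l = B l * B k := by
    intro k l
    have h := expand4 (op (1, true) k) (op (0, true) k) (op (1, true) l) (op (0, true) l)
    rw [hW (1, true) (1, true) k l, hW (1, true) (0, true) k l,
        hW (0, true) (1, true) k l, hW (0, true) (0, true) k l] at h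
    have hz : ∀ i j : Fin 3, pair6 (i, true) (j, true) = 0 := fun i j => rfl
    rw [hz, hz, hz, hz] at h
    have h2 := sub_eq_iff_eq_add.mp h
    show B k * B l = _
    rw [hBdef, h2]
    split_ifs <;> simp
  have loc : ∀ v : W, ∃ K : ℤ, ∀ k, K ≤ k → A k v = 0 ∧ B k v = 0 := by
    intro v
    obtain ⟨Ka, hKa⟩ := hA v (1, false)
    obtain ⟨Kb, hKb⟩ := hA v (0, false)
    obtain ⟨Kc, hKc⟩ := hA v (1, true)
    obtain ⟨Kd, hKd⟩ := hA v (0, true)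
    refine ⟨(Ka.natAbs : ℤ) + Kb.natAbs + Kc.natAbs + Kd.natAbs, fun k hk => ⟨?_, ?_⟩⟩
    · show op (1, false) k v + op (0, false) k v = 0
      rw [hKa k (by omega), hKb k (by omega), add_zero]
    · show op (1, true) k v + op (0, true) k v = 0
      rw [hKc k (by omega), hKd k (by omega), add_zero]
  have fin : ∀ (u v' : WSym6) (r : ℤ) (v : W), (Function.support fun j : ℤ =>
      if j < 0 then op u j (op v' (r - j) v) else op v' (r - j) (op u j v)).Finite := by
    intro u v' r v
    obtain ⟨Ku, hKu⟩ := hA v u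
    obtain ⟨Kv, hKv⟩ := hA v v'
    apply Set.Finite.subset (Set.finite_Icc (min (r - Kv) 0) (max Ku 0))
    intro j hj
    simp only [Function.mem_support, ne_eq] at hj
    by_contra hj'
    apply hj
    simp only [Set.mem_Icc, not_and_or, not_le] at hj'
    split_ifs with hjlt
    · rw [hKv (r - j) (by omega), map_zero]
    · rw [hKu j (by omega), map_zero]
  have halz : ∀ (r : ℤ) (v : W),
      alZero op r v = (-(1/2) : ℂ) • AlZeroAux.hfun A B r v := by
    intro r v
    have hpt : ∀ j : ℤ, (AlZeroAux.P A B r j) v =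
        (if j < 0 then op (1,false) j (op (1,true) (r - j) v)
          else op (1,true) (r - j) (op (1,false) j v))
        + ((if j < 0 then op (1,false) j (op (0,true) (r - j) v)
          else op (0,true) (r - j) (op (1,false) j v))
        + ((if j < 0 then op (0,false) j (op (1,true) (r - j) v)
          else op (1,true) (r - j) (op (0,false) j v))
        + (if j < 0 then op (0,false) j (op (0,true) (r - j) v)
          else op (0,true) (r - j) (op (0,false) j v)))) := by
      intro j
      unfold AlZeroAux.P
      split_ifs with hj
      · show (A j * B (r - j)) v = _
        rw [hAdef, hBdef]
        simp only [Module.End.mul_apply, LinearMap.add_apply, map_add]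
        abel
      · show (B (r - j) * A j) v = _
        rw [hAdef, hBdef]
        simp only [Module.End.mul_apply, LinearMap.add_apply, map_add]
        abel
    have hsum : AlZeroAux.hfun A B r v =
        noMode op (1, false) (1, true) r v + noMode op (1, false) (0, true) r v +
          noMode op (0, false) (1, true) r v + noMode op (0, false) (0, true) r v := by
      unfold AlZeroAux.hfun noMode
      rw [finsum_congr hpt]
      rw [finsum_add_distrib (fin _ _ _ _)
          (((fin (1,false) (0,true) r v).union ((fin (0,false) (1,true) r v).union
            (fin (0,false) (0,true) r v))).subset
            ((Function.support_add _ _).trans (Set.union_subset_union_right _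
              (Function.support_add _ _))))]
      rw [finsum_add_distrib (fin _ _ _ _)
          (((fin (0,false) (1,true) r v).union (fin (0,false) (0,true) r v)).subset
            (Function.support_add _ _))]
      rw [finsum_add_distrib (fin _ _ _ _) (fin _ _ _ _)]
      abel
    unfold alZero
    rw [hsum]
  have hsm := AlZeroAux.hfun_smul (A := A) (B := B) loc
  have hcomm := AlZeroAux.hfun_comm (c := (-4 : ℂ)) hAB hAA hBB loc m n w
  rw [halz n w, halz m w, halz m _, halz n _, hsm m _ _, hsm n _ _]
  have hcollect : ∀ x y : W,
      ((-(1/2) : ℂ) • ((-(1/2) : ℂ) • x)) - ((-(1/2) : ℂ) • ((-(1/2) : ℂ) • y))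
        = ((1/4 : ℂ)) • (x - y) := by
    intro x y
    rw [smul_smul, smul_smul, ← smul_sub]
    norm_num
  rw [hcollect, hcomm]
  by_cases hmn : m + n = 0
  · rw [if_pos hmn, if_pos hmn, smul_smul]
    congr 1
    ring
  · rw [if_neg hmn, if_neg hmn, smul_zero]
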